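/- If x₁,…,x₄ ∈ ℝ³ are distinct points, u₁,…,u₄ are all nonzero, and for each i the vector equation Σ_{j≠i} (x_i - x_j)/|x_i - x_j|³ · u_j = 0 holds, then x₁, x₂, x₃, x₄ are coplanar (lie in a common 2-dimensional affine subspace). -/

import Mathlib

open RealInnerProductSpace in
open Finset in
theorem stmt_15 (x : Fin 4 → EuclideanSpace ℝ (Fin 3))
    (hinj : Function.Injective x)
    (u : Fin 4 → ℝ) (hu : ∀ i, u i ≠ 0)
    (h : ∀ i, ∑ j ∈ univ \ {i}, (u j / ‖x i - x j‖ ^ 3) • (x i - x j) = 0) :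
    Module.finrank ℝ (vectorSpan ℝ (Set.range x)) ≤ 2 := by
  classical
  set S : Submodule ℝ (EuclideanSpace ℝ (Fin 3)) :=
    Submodule.span ℝ {x 1 - x 0, x 2 - x 0} with hSdef
  have hx3 : x 3 - x 0 ∈ S := by
    by_contra h3
    set w : EuclideanSpace ℝ (Fin 3) := x 3 - x 0 with hw
    set n : EuclideanSpace ℝ (Fin 3) :=
      w - (S.orthogonalProjectionOnto w : EuclideanSpace ℝ (Fin 3)) with hn
    have hnS : n ∈ Sᗮ := Submodule.sub_starProjection_mem_orthogonal (K := S) w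
    have hn0 : n ≠ 0 := by
      intro h0
      apply h3
      have hwp : w = (S.orthogonalProjectionOnto w : EuclideanSpace ℝ (Fin 3)) := by
        rwa [sub_eq_zero] at h0
      rw [hwp]
      exact (S.orthogonalProjectionOnto w).2
    have hinner : ⟪n, w⟫ = ‖n‖ ^ 2 := by
      have hwd : w = (S.orthogonalProjectionOnto w : EuclideanSpace ℝ (Fin 3)) + n := by
        simp [hn]
      rw [hwd, inner_add_right]
      have hz : ⟪n, (S.orthogonalProjectionOnto w : EuclideanSpace ℝ (Fin 3))⟫ = 0 := by
        rw [real_inner_comm]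
        exact hnS _ (S.orthogonalProjectionOnto w).2
      rw [hz, real_inner_self_eq_norm_sq]
      ring
    have hmem1 : ⟪n, x 0 - x 1⟫ = 0 := by
      have : (x 1 - x 0) ∈ S := Submodule.subset_span (Or.inl rfl)
      have h' := hnS _ this
      rw [real_inner_comm] at h'
      rw [show x 0 - x 1 = -(x 1 - x 0) by abel, inner_neg_right, h', neg_zero]
    have hmem2 : ⟪n, x 0 - x 2⟫ = 0 := by
      have : (x 2 - x 0) ∈ S := Submodule.subset_span (Or.inr rfl)
      have h' := hnS _ this
      rw [real_inner_comm] at h'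
      rw [show x 0 - x 2 = -(x 2 - x 0) by abel, inner_neg_right, h', neg_zero]
    have h0 := h 0
    have hsum : ∑ j : Fin 4, (u j / ‖x 0 - x j‖ ^ 3) • (x 0 - x j) = 0 := by
      rw [← h0]
      symm
      apply Finset.sum_subset (Finset.sdiff_subset)
      intro j _ hj
      have : j = 0 := by
        simp only [Finset.mem_sdiff, Finset.mem_univ, true_and, Finset.mem_singleton,
          not_not] at hj
        exact hj
      subst this
      simp
    have hin := congrArg (fun v => ⟪n, v⟫) hsum
    simp only [Fin.sum_univ_four, inner_add_right, inner_sum, inner_smul_right, inner_zero_right] at hin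
    rw [hmem1, hmem2] at hin
    have hinner3 : ⟪n, x 0 - x 3⟫ = -‖n‖ ^ 2 := by
      rw [show x 0 - x 3 = -w by rw [hw]; abel, inner_neg_right, hinner]
    have hx03 : x 0 ≠ x 3 := fun hEq => by
      have : (0 : Fin 4) = 3 := hinj hEq
      exact absurd this (by decide)
    have hnorm : ‖x 0 - x 3‖ ≠ 0 := by
      simp [sub_eq_zero, hx03]
    simp only [sub_self, norm_zero, inner_zero_right] at hin
    rw [hinner3] at hin
    have hc : u 3 / ‖x 0 - x 3‖ ^ 3 ≠ 0 := by
      exact div_ne_zero (hu 3) (pow_ne_zero 3 hnorm)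
    have hn2 : ‖n‖ ^ 2 ≠ 0 := pow_ne_zero 2 (norm_ne_zero_iff.mpr hn0)
    have : u 3 / ‖x 0 - x 3‖ ^ 3 * -‖n‖ ^ 2 = 0 := by linarith [hin]
    rcases mul_eq_zero.mp this with h1 | h2
    · exact hc h1
    · exact hn2 (by linarith)
  have hle : vectorSpan ℝ (Set.range x) ≤ S := by
    rw [vectorSpan_eq_span_vsub_set_right ℝ (Set.mem_range_self 0)]
    rw [Submodule.span_le]
    rintro v ⟨p, ⟨i, rfl⟩, rfl⟩
    simp only [vsub_eq_sub, SetLike.mem_coe]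
    fin_cases i
    · simp
    · exact Submodule.subset_span (Or.inl rfl)
    · exact Submodule.subset_span (Or.inr rfl)
    · exact hx3
  calc Module.finrank ℝ (vectorSpan ℝ (Set.range x)) ≤ Module.finrank ℝ S :=
        Submodule.finrank_mono hle
    _ ≤ 2 := by
        have h2 := finrank_span_le_card (R := ℝ) ({x 1 - x 0, x 2 - x 0} :
          Set (EuclideanSpace ℝ (Fin 3)))
        refine le_trans h2 ?_
        rw [Set.toFinset_insert, Set.toFinset_singleton]
        exact le_trans (Finset.card_insert_le _ _) (by simp)
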